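/- arXiv:2007.12321 — 5 statements merged into one kernel-verified Lean document; each statement's English description precedes it below -/
import Mathlib

section
/- Let q be a positive integer with q not congruent to 2 modulo 4. Then the series defining f(1/q) converges, with sum 1/2 if q ≡ 0 (mod 4), with sum 1/2 − 1/q if q ≡ 1 (mod 4), and with sum 1/2 + 1/q if q ≡ 3 (mod 4). -/
open Real

/-- The `n`-th term (indexed from `0`, representing the positive integer `n+1`)
of the series defining the secant zeta function `ψ(r) = (4/π²) ∑_{n≥1} sec(nπr)/n²`. -/
noncomputable def psiSeries (r : ℝ) : ℕ → ℝ :=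
  fun n => (4 / π ^ 2) * (1 / Real.cos (((n : ℝ) + 1) * π * r)) / ((n : ℝ) + 1) ^ 2

/-- The `k`-th term of the series defining `f(r) = (4/π²) ∑_{k≥0} sec((2k+1)πr)/(2k+1)²`. -/
noncomputable def fSeries (r : ℝ) : ℕ → ℝ :=
  fun k => (4 / π ^ 2) * (1 / Real.cos ((2 * (k : ℝ) + 1) * π * r)) / (2 * (k : ℝ) + 1) ^ 2


lemma cosSum {x : ℝ} (hx : x ∈ Set.Icc (0:ℝ) 1) :
    HasSum (fun n : ℕ => 1 / ((n : ℝ)) ^ 2 * Real.cos (2 * π * n * x)) (π^2 * (x^2 - x + 1/6)) := by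
  have h := hasSum_one_div_nat_pow_mul_cos (k := 1) one_ne_zero hx
  convert h using 1
  have hb : (Polynomial.map (algebraMap ℚ ℝ) (Polynomial.bernoulli 2)).eval x = x^2 - x + 1/6 := by
    have h2 : _root_.bernoulli 2 = 1/6 := by
      rw [bernoulli_eq_bernoulli'_of_ne_one (by norm_num), bernoulli'_two]
    simp [Polynomial.bernoulli, Finset.sum_range_succ, bernoulli_zero, bernoulli_one, h2]
    ring
  rw [show 2*1 = 2 from rfl] at *
  rw [hb, show (Nat.factorial 2 : ℝ) = 2 by norm_num [Nat.factorial]]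
  ring

lemma oddCosSum {x y : ℝ} (hx : x ∈ Set.Icc (0:ℝ) 1) (hy : y ∈ Set.Icc (0:ℝ) 1)
    (h : 2*x = y ∨ 2*x = y + 1) :
    HasSum (fun k : ℕ => Real.cos (2*π*(2*(k:ℝ)+1)*x) / (2*(k:ℝ)+1)^2)
      (π^2 * (x^2-x+1/6) - (π^2 * (y^2-y+1/6))/4) := by
  have H := cosSum hx
  set f : ℕ → ℝ := fun n => 1 / ((n : ℝ)) ^ 2 * Real.cos (2 * π * n * x) with hf
  have He : HasSum (fun k => f (2*k)) ((π^2 * (y^2-y+1/6))/4) := by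
    have H4 := (cosSum hy).div_const 4
    convert H4 using 1
    · rfl
    funext k
    have harg : ∀ c : ℝ, 2*x = y + c → 2 * π * ((2*k : ℕ):ℝ) * x = 2*π*(k:ℝ)*y + (k:ℝ)*c*(2*π) := by
      intro c hc
      push_cast
      linear_combination (2*π*(k:ℝ)) * hc
    have hcos : Real.cos (2 * π * ((2*k : ℕ):ℝ) * x) = Real.cos (2*π*(k:ℝ)*y) := by
      rcases h with hc | hc
      · rw [harg 0 (by linarith)]
        norm_num
      · rw [harg 1 hc]
        simpa using Real.cos_add_nat_mul_two_pi (2*π*(k:ℝ)*y) k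
    simp only [hf, hcos]
    push_cast
    rw [mul_pow]
    ring
  have hsumm : Summable (fun k => f (2*k+1)) :=
    H.summable.comp_injective (fun a b hab => by omega)
  have Ho := hsumm.hasSum
  have Htot := He.even_add_odd Ho
  have ht : ∑' k, f (2*k+1) = π^2 * (x^2-x+1/6) - (π^2 * (y^2-y+1/6))/4 := by
    have := Htot.unique H
    linarith
  rw [ht] at Ho
  convert Ho using 1
  funext k
  simp only [hf]
  push_cast
  ring


lemma secIdentity {θ : ℝ} {m : ℕ}
    (h : Complex.exp (2*(m:ℂ)*(θ:ℂ)*Complex.I) = (-1)^(m+1)) :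
    (∑ j ∈ Finset.range m, (-1:ℝ)^j * Real.cos ((2*(j:ℝ)+1)*θ)) * Real.cos θ = 1 := by
  have key : ((∑ j ∈ Finset.range m, (-1:ℝ)^j * Real.cos ((2*(j:ℝ)+1)*θ)) * Real.cos θ : ℂ) = 1 := by
    push_cast [Complex.ofReal_cos]
    set w : ℂ := Complex.exp ((θ:ℂ) * Complex.I) with hw
    have hw0 : w ≠ 0 := Complex.exp_ne_zero _
    have hw2m : w ^ (2*m) = (-1)^(m+1) := by
      rw [hw, ← Complex.exp_nat_mul, ← h]
      congr 1
      push_cast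
      ring
    have hcosθ : Complex.cos (θ:ℂ) = (w + w⁻¹)/2 := by
      rw [Complex.cos, neg_mul, Complex.exp_neg]
    have hterm : ∀ j ∈ Finset.range m, (-1:ℂ)^j * Complex.cos ((2*((j:ℕ):ℂ)+1)*(θ:ℂ))
        = ((-(w^2))^j * w + (-(w⁻¹^2))^j * w⁻¹)/2 := by
      intro j _
      have e1 : Complex.exp ((2*((j:ℕ):ℂ)+1) * (θ:ℂ) * Complex.I) = w^(2*j+1) := by
        rw [hw, ← Complex.exp_nat_mul]
        congr 1
        push_cast
        ring
      rw [Complex.cos, neg_mul, Complex.exp_neg, e1, ← inv_pow]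
      ring
    rw [Finset.sum_congr rfl hterm, hcosθ]
    have g1 : (∑ j ∈ Finset.range m, (-(w^2))^j) * (w^2+1) = 2 := by
      have hg := geom_sum_mul (-(w^2)) m
      have hm : (-(w^2))^m = -1 :=
        calc (-(w^2))^m = (-1)^m * w^(2*m) := by rw [neg_pow, ← pow_mul]
        _ = (-1)^(m+(m+1)) := by rw [hw2m, ← pow_add]
        _ = -1 := Odd.neg_one_pow ⟨m, by ring⟩
      rw [hm] at hg
      linear_combination -hg
    have g2 : (∑ j ∈ Finset.range m, (-(w⁻¹^2))^j) * (w⁻¹^2+1) = 2 := by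
      have hg := geom_sum_mul (-(w⁻¹^2)) m
      have hm : (-(w⁻¹^2))^m = -1 :=
        calc (-(w⁻¹^2))^m = (-1)^m * (w^(2*m))⁻¹ := by
              rw [neg_pow, inv_pow, inv_pow, ← pow_mul]
        _ = (-1)^m * ((-1)^(m+1))⁻¹ := by rw [hw2m]
        _ = (-1)^(m+(m+1)) := by rw [← inv_pow, inv_neg_one, ← pow_add]
        _ = -1 := Odd.neg_one_pow ⟨m, by ring⟩
      rw [hm] at hg
      linear_combination -hg
    set S := ∑ j ∈ Finset.range m, (-(w^2))^j
    set T := ∑ j ∈ Finset.range m, (-(w⁻¹^2))^j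
    rw [← Finset.sum_div, Finset.sum_add_distrib, ← Finset.sum_mul, ← Finset.sum_mul]
    have hinv : w * w⁻¹ = 1 := mul_inv_cancel₀ hw0
    linear_combination g1/4 + g2/4 + (S+T)/4 * hinv
  exact_mod_cast key


lemma hasSum_f (q m : ℕ) (hq : 0 < q) (hmq : m ≤ q)
    (hexp : ∀ k : ℕ, Complex.exp (2*(m:ℂ)*(((2*(k:ℝ)+1)*π/q : ℝ):ℂ)*Complex.I) = (-1)^(m+1)) :
    HasSum (fSeries (1/(q:ℝ)))
      (∑ j ∈ Finset.range m, (-1:ℝ)^j *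
        (1/2 - (2*(j:ℝ)+1)/q + (if 2*j+1 ≤ q then 0 else 2*((2*(j:ℝ)+1)/q - 1)))) := by
  have hqR : (0:ℝ) < q := Nat.cast_pos.mpr hq
  have hπ : π ≠ 0 := Real.pi_ne_zero
  have key : ∀ j ∈ Finset.range m, HasSum
      (fun k : ℕ => (-1:ℝ)^j * ((4/π^2) * Real.cos ((2*(j:ℝ)+1)*((2*(k:ℝ)+1)*π/q)) / (2*(k:ℝ)+1)^2))
      ((-1:ℝ)^j * (1/2 - (2*(j:ℝ)+1)/q + (if 2*j+1 ≤ q then 0 else 2*((2*(j:ℝ)+1)/q - 1)))) := by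
    intro j hj
    rw [Finset.mem_range] at hj
    set x : ℝ := (2*(j:ℝ)+1)/(2*q) with hxdef
    have hx : x ∈ Set.Icc (0:ℝ) 1 := by
      constructor
      · positivity
      · rw [hxdef, div_le_one (by positivity)]
        have : (j:ℝ) + 1 ≤ q := by exact_mod_cast Nat.succ_le_of_lt (lt_of_lt_of_le hj hmq)
        linarith
    by_cases hcase : 2*j+1 ≤ q
    · set y : ℝ := (2*(j:ℝ)+1)/q with hydef
      have hcR : 2*(j:ℝ)+1 ≤ q := by exact_mod_cast hcase
      have hy : y ∈ Set.Icc (0:ℝ) 1 := by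
        constructor
        · positivity
        · rw [hydef, div_le_one hqR]; exact hcR
      have h2xy : 2*x = y ∨ 2*x = y + 1 := by
        left; rw [hxdef, hydef]; field_simp
      have H := (oddCosSum hx hy h2xy).mul_left ((-1:ℝ)^j * (4/π^2))
      rw [if_pos hcase]
      convert H using 1
      · rfl
      · funext k
        have harg : 2*π*(2*(k:ℝ)+1)*x = (2*(j:ℝ)+1)*((2*(k:ℝ)+1)*π/q) := by
          rw [hxdef]; field_simp
        rw [harg]; ring
      · rw [hxdef, hydef]; field_simp; ring
    · set y : ℝ := (2*(j:ℝ)+1)/q - 1 with hydef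
      have hcR : (q:ℝ) + 1 ≤ 2*(j:ℝ)+1 := by
        push_cast
        have : q + 1 ≤ 2*j+1 := by omega
        exact_mod_cast this
      have hjq : 2*(j:ℝ)+1 ≤ 2*q := by
        have : (j:ℝ) + 1 ≤ q := by exact_mod_cast Nat.succ_le_of_lt (lt_of_lt_of_le hj hmq)
        linarith
      have hy : y ∈ Set.Icc (0:ℝ) 1 := by
        constructor
        · rw [hydef, sub_nonneg, le_div_iff₀ hqR]; linarith
        · rw [hydef, sub_le_iff_le_add, div_le_iff₀ hqR]; linarith
      have h2xy : 2*x = y ∨ 2*x = y + 1 := by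
        right; rw [hxdef, hydef]; field_simp; ring
      have H := (oddCosSum hx hy h2xy).mul_left ((-1:ℝ)^j * (4/π^2))
      rw [if_neg hcase]
      convert H using 1
      · rfl
      · funext k
        have harg : 2*π*(2*(k:ℝ)+1)*x = (2*(j:ℝ)+1)*((2*(k:ℝ)+1)*π/q) := by
          rw [hxdef]; field_simp
        rw [harg]; ring
      · rw [hxdef, hydef]; field_simp; ring
  have Hsum := hasSum_sum key
  convert Hsum using 1
  funext k
  have hcosne : Real.cos ((2*(k:ℝ)+1)*π/q) ≠ 0 := by
    intro h0
    have := secIdentity (hexp k)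
    rw [h0, mul_zero] at this
    norm_num at this
  have hsec : 1 / Real.cos ((2*(k:ℝ)+1)*π/q)
      = ∑ j ∈ Finset.range m, (-1:ℝ)^j * Real.cos ((2*(j:ℝ)+1)*((2*(k:ℝ)+1)*π/q)) := by
    rw [eq_comm, eq_div_iff hcosne]
    exact secIdentity (hexp k)
  have hargs : (2*(k:ℝ)+1)*π*(1/q) = (2*(k:ℝ)+1)*π/q := by ring
  rw [fSeries, hargs, hsec, Finset.mul_sum, Finset.sum_div]
  apply Finset.sum_congr rfl
  intro j _
  ring


lemma altSum1 (M : ℕ) : ∑ j ∈ Finset.range M, (-1:ℝ)^j = (1 - (-1)^M)/2 := by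
  induction M with
  | zero => simp
  | succ n ih => rw [Finset.sum_range_succ, ih, pow_succ]; ring

lemma altSum2 (M : ℕ) : ∑ j ∈ Finset.range M, (-1:ℝ)^j * (2*(j:ℝ)+1) = (-1)^(M+1) * M := by
  induction M with
  | zero => simp
  | succ n ih =>
    rw [Finset.sum_range_succ, ih]
    push_cast
    rw [pow_succ, pow_succ]
    ring

lemma altSum3 (m q : ℕ) : ∑ j ∈ Finset.range m, (-1:ℝ)^j * (1/2 - (2*(j:ℝ)+1)/q)
    = (1 - (-1:ℝ)^m)/4 - (-1:ℝ)^(m+1) * m / q := by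
  have h : ∀ j ∈ Finset.range m, (-1:ℝ)^j * (1/2 - (2*(j:ℝ)+1)/q)
      = (-1:ℝ)^j * (1/2) - ((-1:ℝ)^j * (2*(j:ℝ)+1)) * (1/q) := by
    intro j _; ring
  rw [Finset.sum_congr rfl h, Finset.sum_sub_distrib, ← Finset.sum_mul, ← Finset.sum_mul,
    altSum1, altSum2]
  ring

lemma sum_val_even (t q : ℕ) (ht : 0 < t) (hqt : q = 4*t) :
    ∑ j ∈ Finset.range (2*t), (-1:ℝ)^j *
      (1/2 - (2*(j:ℝ)+1)/q + (if 2*j+1 ≤ q then 0 else 2*((2*(j:ℝ)+1)/q - 1))) = 1/2 := by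
  have h : ∀ j ∈ Finset.range (2*t), (-1:ℝ)^j *
      (1/2 - (2*(j:ℝ)+1)/q + (if 2*j+1 ≤ q then 0 else 2*((2*(j:ℝ)+1)/q - 1)))
      = (-1:ℝ)^j * (1/2 - (2*(j:ℝ)+1)/q) := by
    intro j hj
    rw [Finset.mem_range] at hj
    rw [if_pos (by omega)]
    ring
  rw [Finset.sum_congr rfl h, altSum3]
  have h1 : (-1:ℝ)^(2*t) = 1 := by rw [pow_mul]; norm_num
  have h2 : (-1:ℝ)^(2*t+1) = -1 := by rw [pow_succ, h1]; norm_num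
  rw [h1, h2, hqt]
  have htR : (0:ℝ) < t := by exact_mod_cast ht
  push_cast
  field_simp
  ring

lemma sum_val_odd (M q : ℕ) (hqM : q = 2*M+1) :
    ∑ j ∈ Finset.range q, (-1:ℝ)^j *
      (1/2 - (2*(j:ℝ)+1)/q + (if 2*j+1 ≤ q then 0 else 2*((2*(j:ℝ)+1)/q - 1)))
    = -1/2 + (-1:ℝ)^(M+1) * (2*(-1:ℝ)^(M+1)*M + 1 - (-1:ℝ)^M) / q := by
  have hqR : (0:ℝ) < q := by rw [hqM]; positivity
  have h : ∀ j ∈ Finset.range q, (-1:ℝ)^j *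
      (1/2 - (2*(j:ℝ)+1)/q + (if 2*j+1 ≤ q then 0 else 2*((2*(j:ℝ)+1)/q - 1)))
      = (-1:ℝ)^j * (1/2 - (2*(j:ℝ)+1)/q)
        + (-1:ℝ)^j * (if 2*j+1 ≤ q then 0 else 2*((2*(j:ℝ)+1)/q - 1)) := by
    intro j _; ring
  rw [Finset.sum_congr rfl h, Finset.sum_add_distrib, altSum3]
  have hodd : (-1:ℝ)^q = -1 := by
    rw [hqM, pow_succ, pow_mul]; norm_num
  have hq1 : (-1:ℝ)^(q+1) = 1 := by rw [pow_succ, hodd]; norm_num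
  -- second sum
  have hsplit : Finset.range q = Finset.Ico 0 q := by rw [Finset.range_eq_Ico]
  have hMq : M + 1 ≤ q := by omega
  have e2 : ∑ j ∈ Finset.range q,
      (-1:ℝ)^j * (if 2*j+1 ≤ q then 0 else 2*((2*(j:ℝ)+1)/q - 1))
      = (-1:ℝ)^(M+1) * (2*(-1:ℝ)^(M+1)*M + 1 - (-1:ℝ)^M) / q := by
    rw [hsplit, ← Finset.sum_Ico_consecutive _ (Nat.zero_le (M+1)) hMq]
    have hz : ∑ j ∈ Finset.Ico 0 (M+1),
        (-1:ℝ)^j * (if 2*j+1 ≤ q then 0 else 2*((2*(j:ℝ)+1)/q - 1)) = 0 := by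
      apply Finset.sum_eq_zero
      intro j hj
      rw [Finset.mem_Ico] at hj
      rw [if_pos (by omega)]
      ring
    rw [hz, zero_add, Finset.sum_Ico_eq_sum_range]
    have hlen : q - (M+1) = M := by omega
    rw [hlen]
    have h3 : ∀ i ∈ Finset.range M,
        (-1:ℝ)^(M+1+i) * (if 2*(M+1+i)+1 ≤ q then 0 else 2*((2*((M+1+i : ℕ):ℝ)+1)/q - 1))
        = (-1:ℝ)^(M+1) * (((-1:ℝ)^i * (2*(i:ℝ)+1)) * (2/q) + (-1:ℝ)^i * (2/q)) := by
      intro i hi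
      rw [if_neg (by omega), pow_add]
      have : 2*((2*((M+1+i : ℕ):ℝ)+1)/q - 1) = (2*(i:ℝ)+1) * (2/q) + 2/q := by
        rw [hqM]
        push_cast
        field_simp
        ring
      rw [this]
      ring
    rw [Finset.sum_congr rfl h3, ← Finset.mul_sum, Finset.sum_add_distrib,
      ← Finset.sum_mul, ← Finset.sum_mul, altSum1, altSum2]
    field_simp
    ring
  rw [e2, hodd, hq1]
  have hq0 : (q:ℝ) ≠ 0 := ne_of_gt hqR
  field_simp
  ring


lemma hexp_odd (q : ℕ) (hq : 0 < q) (hodd : q % 2 = 1) (k : ℕ) :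
    Complex.exp (2*(q:ℂ)*(((2*(k:ℝ)+1)*π/(q:ℝ) : ℝ):ℂ)*Complex.I) = (-1:ℂ)^(q+1) := by
  have hq0 : (q:ℂ) ≠ 0 := Nat.cast_ne_zero.mpr hq.ne'
  have harg : 2*(q:ℂ)*(((2*(k:ℝ)+1)*π/(q:ℝ) : ℝ):ℂ)*Complex.I
      = ((2*k+1 : ℕ):ℂ)*(2*(π:ℂ)*Complex.I) := by
    push_cast
    field_simp
  rw [harg, Complex.exp_nat_mul_two_pi_mul_I, Even.neg_one_pow ⟨q/2+1, by omega⟩]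

lemma hexp_even (m q : ℕ) (hm : 0 < m) (hq2m : q = 2*m) (hmEven : m % 2 = 0) (k : ℕ) :
    Complex.exp (2*(m:ℂ)*(((2*(k:ℝ)+1)*π/(q:ℝ) : ℝ):ℂ)*Complex.I) = (-1:ℂ)^(m+1) := by
  have hm0 : (m:ℂ) ≠ 0 := Nat.cast_ne_zero.mpr hm.ne'
  have harg : 2*(m:ℂ)*(((2*(k:ℝ)+1)*π/(q:ℝ) : ℝ):ℂ)*Complex.I
      = ((2*k+1 : ℕ):ℂ)*((π:ℂ)*Complex.I) := by
    rw [hq2m]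
    push_cast
    field_simp
  rw [harg, Complex.exp_nat_mul, Complex.exp_pi_mul_I,
    Odd.neg_one_pow ⟨k, by omega⟩, Odd.neg_one_pow ⟨m/2, by omega⟩]

theorem f_one_div_q (q : ℕ) (hq : 0 < q) (hq2 : q % 4 ≠ 2) :
    (q % 4 = 0 → HasSum (fSeries (1 / (q : ℝ))) (1 / 2)) ∧
    (q % 4 = 1 → HasSum (fSeries (1 / (q : ℝ))) (1 / 2 - 1 / (q : ℝ))) ∧
    (q % 4 = 3 → HasSum (fSeries (1 / (q : ℝ))) (1 / 2 + 1 / (q : ℝ))) := by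
  refine ⟨?_, ?_, ?_⟩
  · intro h0
    obtain ⟨t, ht⟩ : ∃ t, q = 4*t := ⟨q/4, by omega⟩
    have ht0 : 0 < t := by omega
    have H := hasSum_f q (2*t) hq (by omega)
      (fun k => hexp_even (2*t) q (by omega) (by omega) (by omega) k)
    rwa [sum_val_even t q ht0 ht] at H
  · intro h1
    obtain ⟨M, hM⟩ : ∃ M, q = 2*M+1 := ⟨q/2, by omega⟩
    have H := hasSum_f q q hq le_rfl (fun k => hexp_odd q hq (by omega) k)
    rw [sum_val_odd M q hM] at H
    have hMeven : (-1:ℝ)^M = 1 := Even.neg_one_pow ⟨M/2, by omega⟩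
    have hM1 : (-1:ℝ)^(M+1) = -1 := by rw [pow_succ, hMeven]; norm_num
    rw [hMeven, hM1] at H
    convert H using 1
    have hqM : (q:ℝ) = 2*(M:ℝ)+1 := by exact_mod_cast congrArg (Nat.cast (R := ℝ)) hM
    rw [hqM]
    have : (2*(M:ℝ)+1) ≠ 0 := by positivity
    field_simp
    ring
  · intro h3
    obtain ⟨M, hM⟩ : ∃ M, q = 2*M+1 := ⟨q/2, by omega⟩
    have H := hasSum_f q q hq le_rfl (fun k => hexp_odd q hq (by omega) k)
    rw [sum_val_odd M q hM] at H
    have hModd : (-1:ℝ)^M = -1 := Odd.neg_one_pow ⟨M/2, by omega⟩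
    have hM1 : (-1:ℝ)^(M+1) = 1 := by rw [pow_succ, hModd]; norm_num
    rw [hModd, hM1] at H
    convert H using 1
    have hqM : (q:ℝ) = 2*(M:ℝ)+1 := by exact_mod_cast congrArg (Nat.cast (R := ℝ)) hM
    rw [hqM]
    have : (2*(M:ℝ)+1) ≠ 0 := by positivity
    field_simp
    ring
end

section
/- The series defining f(1/3) converges with sum 5/6; that is, (4/π²) ∑_{k=0}^∞ sec((2k+1)π/3)/(2k+1)² = 5/6. -/
open Real

lemma hasSum_even_sq : HasSum (fun n : ℕ => if Even n then (1 : ℝ) / (n : ℝ) ^ 2 else 0)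
    (π ^ 2 / 24) := by
  have h2 : HasSum (fun n : ℕ => (1 / 4 : ℝ) * (1 / (n : ℝ) ^ 2)) (π ^ 2 / 24) := by
    have := hasSum_zeta_two.mul_left (1 / 4 : ℝ)
    convert this using 1
    · rfl
    ring
  have hinj : Function.Injective (fun n : ℕ => 2 * n) := fun a b h => by dsimp at h; omega
  rw [← Function.Injective.hasSum_iff hinj]
  · convert h2 with n
    simp only [Function.comp]
    rw [if_pos (even_two_mul n)]
    push_cast
    ring
  · intro n hn
    rw [if_neg]
    intro ⟨m, hm⟩
    exact hn ⟨m, by dsimp; omega⟩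

lemma hasSum_odd_sq : HasSum (fun k : ℕ => (1 : ℝ) / (2 * (k : ℝ) + 1) ^ 2) (π ^ 2 / 8) := by
  have hg : HasSum (fun n : ℕ => if Even n then 0 else (1 : ℝ) / (n : ℝ) ^ 2)
      (π ^ 2 / 8) := by
    have := hasSum_zeta_two.sub hasSum_even_sq
    have heq : (fun n : ℕ => (1 : ℝ) / (n : ℝ) ^ 2 -
        (if Even n then (1 : ℝ) / (n : ℝ) ^ 2 else 0)) =
        fun n : ℕ => if Even n then 0 else (1 : ℝ) / (n : ℝ) ^ 2 := by
      funext n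
      by_cases h : Even n <;> simp [h]
    rw [heq] at this
    convert this using 1
    · rfl
    ring
  have hinj : Function.Injective (fun k : ℕ => 2 * k + 1) := fun a b h => by dsimp at h; omega
  rw [← Function.Injective.hasSum_iff hinj] at hg
  · convert hg with k
    simp only [Function.comp]
    rw [if_neg (by simp [Nat.even_add_one, parity_simps])]
    push_cast
    ring
  · intro n hn
    rw [if_pos]
    rcases Nat.even_or_odd n with h | h
    · exact h
    · obtain ⟨m, hm⟩ := h
      exact absurd ⟨m, by dsimp; omega⟩ hn

lemma hasSum_mult3 : HasSum (fun k : ℕ => if 3 ∣ (2 * k + 1) then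
    3 * (4 / π ^ 2) / (2 * (k : ℝ) + 1) ^ 2 else 0) (1 / 6) := by
  have hπ : (π : ℝ) ≠ 0 := Real.pi_ne_zero
  have h : HasSum (fun m : ℕ => (4 / (3 * π ^ 2)) * (1 / (2 * (m : ℝ) + 1) ^ 2)) (1 / 6) := by
    have := hasSum_odd_sq.mul_left (4 / (3 * π ^ 2) : ℝ)
    convert this using 1
    · rfl
    field_simp
    ring
  have hinj : Function.Injective (fun m : ℕ => 3 * m + 1) := fun a b h => by dsimp at h; omega
  rw [← Function.Injective.hasSum_iff hinj]
  · convert h with m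
    simp only [Function.comp]
    rw [if_pos (by omega)]
    push_cast
    have h1 : (2 * (3 * (m : ℝ) + 1) + 1) = 3 * (2 * m + 1) := by ring
    rw [h1]
    field_simp
  · intro n hn
    rw [if_neg]
    intro hd
    exact hn ⟨n / 3, by dsimp; omega⟩

theorem f_one_third : HasSum (fSeries (1 / 3)) (5 / 6) := by
  have hπ : (π : ℝ) ≠ 0 := Real.pi_ne_zero
  have h1 : HasSum (fun k : ℕ => (8 / π ^ 2) * (1 / (2 * (k : ℝ) + 1) ^ 2)) 1 := by
    have := hasSum_odd_sq.mul_left (8 / π ^ 2 : ℝ)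
    convert this using 1
    · rfl
    field_simp
  have h2 := h1.sub hasSum_mult3
  have heq : (fun k : ℕ => (8 / π ^ 2) * (1 / (2 * (k : ℝ) + 1) ^ 2) -
      (if 3 ∣ (2 * k + 1) then 3 * (4 / π ^ 2) / (2 * (k : ℝ) + 1) ^ 2 else 0)) =
      fSeries (1 / 3) := by
    funext k
    obtain ⟨m, r, hr, rfl⟩ : ∃ m r, r < 3 ∧ k = 3 * m + r :=
      ⟨k / 3, k % 3, Nat.mod_lt _ (by norm_num), (Nat.div_add_mod k 3).symm⟩
    interval_cases r
    · have hd : ¬ 3 ∣ (2 * (3 * m + 0) + 1) := by omega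
      rw [if_neg hd]
      simp only [fSeries]
      have harg : (2 * ((3 * m + 0 : ℕ) : ℝ) + 1) * π * (1 / 3) = π / 3 + m * (2 * π) := by
        push_cast; ring
      rw [harg, Real.cos_add_nat_mul_two_pi, Real.cos_pi_div_three]
      push_cast
      field_simp
      ring
    · have hd : 3 ∣ (2 * (3 * m + 1) + 1) := by omega
      rw [if_pos hd]
      simp only [fSeries]
      have harg : (2 * ((3 * m + 1 : ℕ) : ℝ) + 1) * π * (1 / 3) = π + m * (2 * π) := by
        push_cast; ring
      rw [harg, Real.cos_add_nat_mul_two_pi, Real.cos_pi]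
      push_cast
      field_simp
      ring
    · have hd : ¬ 3 ∣ (2 * (3 * m + 2) + 1) := by omega
      rw [if_neg hd]
      simp only [fSeries]
      have harg : (2 * ((3 * m + 2 : ℕ) : ℝ) + 1) * π * (1 / 3) =
          ((m + 1 : ℕ) : ℝ) * (2 * π) - π / 3 := by
        push_cast; ring
      rw [harg, Real.cos_nat_mul_two_pi_sub, Real.cos_pi_div_three]
      push_cast
      field_simp
      ring
  rw [heq] at h2
  convert h2 using 1
  · rfl
  norm_num
end

section
/- The series defining f(1/4) converges with sum 1/2; that is, (4/π²) ∑_{k=0}^∞ sec((2k+1)π/4)/(2k+1)² = 1/2. -/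
open Real

/-- Auxiliary: the term `cos(2πn/8)/n²` (zero for `n = 0`). -/
noncomputable def auxF : ℕ → ℝ :=
  fun n => 1 / (n : ℝ) ^ (2 * 1) * Real.cos (2 * π * n * (1 / 8))

lemma auxF_hasSum : HasSum auxF (π ^ 2 * (11 / 192)) := by
  have hB8 : (Polynomial.map (algebraMap ℚ ℝ) (Polynomial.bernoulli 2)).eval (1/8 : ℝ)
      = 11/192 := by
    simp [Polynomial.bernoulli, Finset.sum_range_succ, bernoulli, bernoulli'_two]
    norm_num
  have h := hasSum_one_div_nat_pow_mul_cos (k := 1) one_ne_zero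
      (x := (1/8 : ℝ)) (by constructor <;> norm_num)
  rw [show (2 * 1 : ℕ) = 2 from rfl] at h
  rw [hB8] at h
  convert h using 1
  · rfl
  norm_num [Nat.factorial]
  ring

lemma auxF_even_hasSum : HasSum (fun m : ℕ => auxF (2 * m)) (π ^ 2 * (-1 / 192)) := by
  have hB4 : (Polynomial.map (algebraMap ℚ ℝ) (Polynomial.bernoulli 2)).eval (1/4 : ℝ)
      = -1/48 := by
    simp [Polynomial.bernoulli, Finset.sum_range_succ, bernoulli, bernoulli'_two]
    norm_num
  have h := hasSum_one_div_nat_pow_mul_cos (k := 1) one_ne_zero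
      (x := (1/4 : ℝ)) (by constructor <;> norm_num)
  rw [show (2 * 1 : ℕ) = 2 from rfl] at h
  rw [hB4] at h
  have h2 := h.mul_left (1/4)
  convert h2 using 1
  · rfl
  · funext m
    unfold auxF
    push_cast
    rw [show 2 * π * (2 * (m : ℝ)) * (1/8) = 2 * π * m * (1/4) by ring]
    rw [show ((2 : ℝ) * m) ^ (2*1) = 4 * m ^ 2 by ring]
    rw [show ((m : ℝ)) ^ (2*1) = m ^ 2 by ring]
    rw [← mul_assoc, div_mul_div_comm, one_mul]
  · norm_num [Nat.factorial]
    ring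

lemma auxF_odd_hasSum : HasSum (fun k : ℕ => auxF (2 * k + 1)) (π ^ 2 / 16) := by
  have hsumm : Summable (fun k : ℕ => auxF (2 * k + 1)) :=
    auxF_hasSum.summable.comp_injective (fun a b h => by omega)
  have hOdd := hsumm.hasSum
  have hTot := auxF_even_hasSum.even_add_odd hOdd
  have hval : π ^ 2 * (-1 / 192) + ∑' k, auxF (2 * k + 1) = π ^ 2 * (11 / 192) :=
    hTot.unique auxF_hasSum
  have : ∑' k, auxF (2 * k + 1) = π ^ 2 / 16 := by linarith
  rwa [this] at hOdd

theorem f_one_fourth : HasSum (fSeries (1 / 4)) (1 / 2) := by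
  have hpi : (π : ℝ) ≠ 0 := Real.pi_ne_zero
  have hfun : fSeries (1 / 4) = fun k : ℕ => (8 / π ^ 2) * auxF (2 * k + 1) := by
    funext k
    unfold fSeries auxF
    set θ : ℝ := (2 * (k : ℝ) + 1) * π * (1 / 4) with hθ
    have hc : Real.cos θ ^ 2 = 1 / 2 := by
      have h2 : 2 * θ = (k : ℝ) * π + π / 2 := by rw [hθ]; ring
      have hsq := Real.cos_sq θ
      rw [h2, Real.cos_add, Real.cos_pi_div_two, Real.sin_pi_div_two,
        Real.sin_nat_mul_pi] at hsq
      rw [hsq]; ring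
    have hcne : Real.cos θ ≠ 0 := by
      intro h; rw [h] at hc; norm_num at hc
    have hinv : 1 / Real.cos θ = 2 * Real.cos θ := by
      rw [div_eq_iff hcne]
      nlinarith [hc]
    push_cast
    rw [show 2 * π * (2 * (k : ℝ) + 1) * (1 / 8) = θ by rw [hθ]; ring]
    rw [hinv]
    rw [show (2 * (k : ℝ) + 1) ^ (2 * 1) = (2 * (k : ℝ) + 1) ^ 2 by ring]
    ring
  rw [hfun]
  have h := auxF_odd_hasSum.mul_left (8 / π ^ 2)
  convert h using 1
  · rfl
  field_simp
  ring
end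

section
/- Let K be a positive integer and let ℓ ∈ {1, 2}, and set s = 1/2 − 1/(4K + 2ℓ). Then the series defining f(s) converges with sum (1/4)·1/(1 − 2s) + (2 − ℓ)·(1 − 2s)/4; equivalently, this sum equals (2K + ℓ)/4 + (2 − ℓ)/(4(2K + ℓ)). -/
open Real

/- ### Auxiliary lemmas -/

lemma hasSum_cos_two_aux (x : ℝ) (hx : x ∈ Set.Icc (0:ℝ) 1) :
    HasSum (fun n : ℕ => 1 / (n:ℝ)^2 * Real.cos (2*π*n*x)) (π^2 * (x^2 - x + 1/6)) := by
  have h := hasSum_one_div_nat_pow_mul_cos (k := 1) one_ne_zero hx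
  norm_num at h
  have hb : (Polynomial.aeval x) (Polynomial.bernoulli 2) = x ^ 2 - x + 1 / 6 := by
    simp [Polynomial.bernoulli, Finset.sum_range_succ, bernoulli_zero, bernoulli_one,
      bernoulli_eq_bernoulli'_of_ne_one, bernoulli'_two, Polynomial.aeval_monomial]
    ring
  rw [hb] at h
  convert h using 2 <;> ring

lemma oddcos_left_aux {x : ℝ} (hx : x ∈ Set.Icc (0:ℝ) (1/2)) :
    HasSum (fun k : ℕ => 1/(2*(k:ℝ)+1)^2 * Real.cos (2*π*(2*(k:ℝ)+1)*x)) (π^2*(1/8 - x/2)) := by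
  obtain ⟨hx0, hx1⟩ := hx
  set f : ℕ → ℝ := fun n => 1/(n:ℝ)^2 * Real.cos (2*π*n*x) with hf
  have hS : HasSum f (π^2 * (x^2 - x + 1/6)) := hasSum_cos_two_aux x ⟨hx0, by linarith⟩
  have he : HasSum (fun k => f (2*k)) (π^2*((2*x)^2 - (2*x) + 1/6)/4) := by
    have hfun2 : (fun k : ℕ => f (2*k)) = fun k : ℕ => (1/(k:ℝ)^2 * Real.cos (2*π*k*(2*x)))/4 := by
      funext k
      rw [hf]
      push_cast
      rw [mul_pow, show 2*π*(2*(k:ℝ))*x = 2*π*k*(2*x) by ring]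
      ring
    rw [hfun2]
    exact (hasSum_cos_two_aux (2*x) ⟨by linarith, by linarith⟩).div_const 4
  have hsub : Summable (fun k : ℕ => f (2*k+1)) := by
    apply Summable.of_norm_bounded (g := fun k : ℕ => 1/((k:ℝ)+1)^2)
    · have h0 : Summable (fun n : ℕ => 1/(n:ℝ)^2) := by
        rw [Real.summable_one_div_nat_pow]; norm_num
      have h1 := (summable_nat_add_iff 1).mpr h0
      convert h1 using 2 with k
      · rfl
      push_cast
      ring
    · intro k
      have hb : (1:ℝ)/((2*k+1:ℕ):ℝ)^2 ≤ 1/((k:ℝ)+1)^2 := by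
        apply one_div_le_one_div_of_le (by positivity)
        push_cast
        nlinarith [Nat.cast_nonneg (α := ℝ) k]
      have hc := Real.abs_cos_le_one (2*π*((2*k+1:ℕ):ℝ)*x)
      have hd : (0:ℝ) ≤ 1/((2*k+1:ℕ):ℝ)^2 := by positivity
      rw [hf]
      simp only [norm_mul, Real.norm_eq_abs]
      rw [abs_of_nonneg hd]
      nlinarith [abs_nonneg (Real.cos (2*π*((2*k+1:ℕ):ℝ)*x))]
  have ho := hsub.hasSum
  have huniq := (he.even_add_odd ho).unique hS
  have hval : ∑' k : ℕ, f (2*k+1) = π^2*(1/8 - x/2) := by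
    have h2 : ∑' k : ℕ, f (2*k+1)
        = π^2 * (x^2 - x + 1/6) - π^2*((2*x)^2 - (2*x) + 1/6)/4 := by linarith
    rw [h2]; ring
  rw [hval] at ho
  have hfun : (fun k : ℕ => 1/(2*(k:ℝ)+1)^2 * Real.cos (2*π*(2*(k:ℝ)+1)*x))
      = fun k : ℕ => f (2*k+1) := by
    funext k
    rw [hf]
    push_cast
    ring_nf
  rw [hfun]
  exact ho

lemma oddcos_right_aux {x : ℝ} (hx : x ∈ Set.Icc (1/2:ℝ) 1) :
    HasSum (fun k : ℕ => 1/(2*(k:ℝ)+1)^2 * Real.cos (2*π*(2*(k:ℝ)+1)*x)) (π^2*(x/2 - 3/8)) := by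
  obtain ⟨hx0, hx1⟩ := hx
  have h := oddcos_left_aux (x := 1 - x) ⟨by linarith, by linarith⟩
  have hfun : (fun k : ℕ => 1/(2*(k:ℝ)+1)^2 * Real.cos (2*π*(2*(k:ℝ)+1)*(1-x)))
      = fun k : ℕ => 1/(2*(k:ℝ)+1)^2 * Real.cos (2*π*(2*(k:ℝ)+1)*x) := by
    funext k
    congr 1
    rw [show 2*π*(2*(k:ℝ)+1)*(1-x) = ((2*k+1:ℕ):ℝ)*(2*π) - 2*π*(2*(k:ℝ)+1)*x by push_cast; ring]
    rw [Real.cos_nat_mul_two_pi_sub]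
  rw [hfun] at h
  have h2 : π^2*(1/8 - (1-x)/2) = π^2*(x/2 - 3/8) := by ring
  rwa [h2] at h

lemma cos_nat_pi_aux (k : ℕ) : Real.cos ((k:ℝ) * π) = (-1:ℝ)^k := by
  induction k with
  | zero => simp
  | succ n ih =>
    rw [show (((n+1:ℕ)):ℝ)*π = (n:ℝ)*π + π by push_cast; ring, Real.cos_add_pi, ih, pow_succ]
    ring

lemma sin_sum_aux (α : ℝ) (N : ℕ) :
    Real.sin α * ∑ j ∈ Finset.range N, Real.sin ((2*(j:ℝ)+1)*α)
      = (1 - Real.cos (2*(N:ℝ)*α))/2 := by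
  induction N with
  | zero => simp
  | succ m ih =>
    rw [Finset.sum_range_succ, mul_add, ih]
    have h : Real.cos (2*(m:ℝ)*α) - Real.cos (2*((m:ℝ)+1)*α)
        = 2 * Real.sin ((2*(m:ℝ)+1)*α) * Real.sin α := by
      rw [Real.cos_sub_cos]
      rw [show (2*(m:ℝ)*α + 2*((m:ℝ)+1)*α)/2 = (2*(m:ℝ)+1)*α by ring,
        show (2*(m:ℝ)*α - 2*((m:ℝ)+1)*α)/2 = -α by ring, Real.sin_neg]
      ring
    push_cast
    linarith

lemma sum_lin_aux (a b : ℝ) (m : ℕ) :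
    ∑ j ∈ Finset.range m, (a*(j:ℝ) + b) = a*(m*((m:ℝ)-1)/2) + b*m := by
  induction m with
  | zero => simp
  | succ p ih =>
    rw [Finset.sum_range_succ, ih]
    push_cast
    ring

lemma sumv_odd_aux (K : ℕ) :
    ∑ j ∈ Finset.range (K+(K+1)),
      ((2*(K:ℝ)+1) - |2*(j:ℝ)+1 - (2*(K:ℝ)+1)|)/(2*(2*(K:ℝ)+1))
      = ((2*(K:ℝ)+1)^2+1)/(4*(2*(K:ℝ)+1)) := by
  have hKne : (2*(K:ℝ)+1) ≠ 0 := by positivity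
  rw [Finset.sum_range_add]
  have e1 : ∀ j ∈ Finset.range K,
      ((2*(K:ℝ)+1) - |2*(j:ℝ)+1 - (2*(K:ℝ)+1)|)/(2*(2*(K:ℝ)+1))
      = (1/(2*(K:ℝ)+1))*(j:ℝ) + 1/(2*(2*(K:ℝ)+1)) := by
    intro j hj
    have hjK : (j:ℝ) + 1 ≤ (K:ℝ) := by exact_mod_cast Finset.mem_range.mp hj
    rw [abs_of_nonpos (by linarith)]
    field_simp
    ring
  have e2 : ∀ j ∈ Finset.range (K+1),
      ((2*(K:ℝ)+1) - |2*((K+j:ℕ):ℝ)+1 - (2*(K:ℝ)+1)|)/(2*(2*(K:ℝ)+1))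
      = (-(1/(2*(K:ℝ)+1)))*(j:ℝ) + 1/2 := by
    intro j hj
    push_cast
    rw [abs_of_nonneg (by have := Nat.cast_nonneg (α := ℝ) j; linarith)]
    field_simp
    ring
  rw [Finset.sum_congr rfl e1, Finset.sum_congr rfl e2, sum_lin_aux, sum_lin_aux]
  push_cast
  field_simp
  ring

lemma sumv_even_aux (K : ℕ) :
    ∑ j ∈ Finset.range ((K+1)+(K+1)),
      ((2*(K:ℝ)+2) - |2*(j:ℝ)+1 - (2*(K:ℝ)+2)|)/(2*(2*(K:ℝ)+2))
      = (2*(K:ℝ)+2)/4 := by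
  have hKne : (2*(K:ℝ)+2) ≠ 0 := by positivity
  rw [Finset.sum_range_add]
  have e1 : ∀ j ∈ Finset.range (K+1),
      ((2*(K:ℝ)+2) - |2*(j:ℝ)+1 - (2*(K:ℝ)+2)|)/(2*(2*(K:ℝ)+2))
      = (1/(2*(K:ℝ)+2))*(j:ℝ) + 1/(2*(2*(K:ℝ)+2)) := by
    intro j hj
    have hjK : (j:ℝ) + 1 ≤ (K:ℝ)+1 := by exact_mod_cast Finset.mem_range.mp hj
    rw [abs_of_nonpos (by linarith)]
    field_simp
    ring
  have e2 : ∀ j ∈ Finset.range (K+1),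
      ((2*(K:ℝ)+2) - |2*(((K+1)+j:ℕ):ℝ)+1 - (2*(K:ℝ)+2)|)/(2*(2*(K:ℝ)+2))
      = (-(1/(2*(K:ℝ)+2)))*(j:ℝ) + (2*(K:ℝ)+1)/(2*(2*(K:ℝ)+2)) := by
    intro j hj
    push_cast
    rw [abs_of_nonneg (by have := Nat.cast_nonneg (α := ℝ) j; linarith)]
    field_simp
    ring
  rw [Finset.sum_congr rfl e1, Finset.sum_congr rfl e2, sum_lin_aux, sum_lin_aux]
  push_cast
  field_simp
  ring

theorem f_near_one_half (K : ℕ) (hK : 0 < K) (ℓ : ℕ) (hℓ : ℓ = 1 ∨ ℓ = 2)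
    (s : ℝ) (hs : s = 1 / 2 - 1 / (4 * (K : ℝ) + 2 * (ℓ : ℝ))) :
    HasSum (fSeries s) ((1 / 4) * (1 / (1 - 2 * s)) + (2 - (ℓ : ℝ)) * (1 - 2 * s) / 4) ∧
    (1 / 4) * (1 / (1 - 2 * s)) + (2 - (ℓ : ℝ)) * (1 - 2 * s) / 4 =
      (2 * (K : ℝ) + (ℓ : ℝ)) / 4 + (2 - (ℓ : ℝ)) / (4 * (2 * (K : ℝ) + (ℓ : ℝ))) := by
  have hπ : π ≠ 0 := Real.pi_ne_zero
  set N : ℕ := 2*K + ℓ with hN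
  have hNpos : 0 < N := by rcases hℓ with h | h <;> omega
  have hn : (0:ℝ) < (N:ℝ) := by exact_mod_cast hNpos
  have hNre : ((N:ℝ)) = 2*(K:ℝ) + (ℓ:ℝ) := by rw [hN]; push_cast; ring
  have h4 : 4*(K:ℝ) + 2*(ℓ:ℝ) = 2*(N:ℝ) := by rw [hNre]; ring
  have hs' : s = 1/2 - 1/(2*(N:ℝ)) := by rw [hs, h4]
  have h12s : 1 - 2*s = 1/(N:ℝ) := by
    rw [hs']
    rw [eq_div_iff (ne_of_gt hn)]
    field_simp
    ring
  have heq : (1/4)*(1/(1-2*s)) + (2-(ℓ:ℝ))*(1-2*s)/4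
      = (2*(K:ℝ)+(ℓ:ℝ))/4 + (2-(ℓ:ℝ))/(4*(2*(K:ℝ)+(ℓ:ℝ))) := by
    rw [h12s, one_div_one_div, ← hNre]
    field_simp
  refine ⟨?_, heq⟩
  rw [h12s, one_div_one_div]
  have key : ∀ j ∈ Finset.range N, HasSum
      (fun k : ℕ => -(4/π^2) * (1/(2*(k:ℝ)+1)^2 *
        Real.cos (2*π*(2*(k:ℝ)+1)*((2*(j:ℝ)+1)/(4*(N:ℝ)) + 1/4))))
      (((N:ℝ) - |2*(j:ℝ)+1 - (N:ℝ)|)/(2*(N:ℝ))) := by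
    intro j hj
    have hjN : (j:ℝ) + 1 ≤ (N:ℝ) := by exact_mod_cast Finset.mem_range.mp hj
    rcases le_or_gt (2*(j:ℝ)+1) (N:ℝ) with h | h
    · have h1 : (2*(j:ℝ)+1)/(4*(N:ℝ)) ≤ 1/4 := by
        rw [div_le_div_iff₀ (by positivity) (by norm_num)]
        linarith
      have h0 : (0:ℝ) ≤ (2*(j:ℝ)+1)/(4*(N:ℝ)) := by positivity
      have H := (oddcos_left_aux (x := (2*(j:ℝ)+1)/(4*(N:ℝ)) + 1/4)
        ⟨by linarith, by linarith⟩).mul_left (-(4/π^2))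
      convert H using 1
      · rfl
      rw [abs_of_nonpos (by linarith)]
      field_simp
      ring
    · have h1 : (2*(j:ℝ)+1)/(4*(N:ℝ)) < 1/2 := by
        rw [div_lt_div_iff₀ (by positivity) (by norm_num)]
        linarith
      have h2 : 1/4 ≤ (2*(j:ℝ)+1)/(4*(N:ℝ)) := by
        rw [le_div_iff₀ (by positivity)]
        linarith
      have H := (oddcos_right_aux (x := (2*(j:ℝ)+1)/(4*(N:ℝ)) + 1/4)
        ⟨by linarith, by linarith⟩).mul_left (-(4/π^2))
      convert H using 1
      · rfl
      rw [abs_of_nonneg (by linarith)]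
      field_simp
      ring
  have hsum := hasSum_sum key
  have hfeq : fSeries s = fun k : ℕ => ∑ j ∈ Finset.range N,
      -(4/π^2) * (1/(2*(k:ℝ)+1)^2 *
        Real.cos (2*π*(2*(k:ℝ)+1)*((2*(j:ℝ)+1)/(4*(N:ℝ)) + 1/4))) := by
    funext k
    set θ : ℝ := π/(2*(N:ℝ)) with hθ
    have hdir := sin_sum_aux ((2*(k:ℝ)+1)*θ) N
    rw [show 2*(N:ℝ)*((2*(k:ℝ)+1)*θ) = ((2*k+1:ℕ):ℝ)*π by
        rw [hθ]; push_cast; field_simp; try ring] at hdir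
    rw [cos_nat_pi_aux] at hdir
    rw [show ((-1:ℝ))^(2*k+1) = -1 by rw [pow_succ, pow_mul]; norm_num] at hdir
    norm_num at hdir
    have hcos : Real.cos ((2*(k:ℝ)+1)*π*s) = (-1:ℝ)^k * Real.sin ((2*(k:ℝ)+1)*θ) := by
      rw [show (2*(k:ℝ)+1)*π*s = ((k:ℝ)*π + π/2) - (2*(k:ℝ)+1)*θ by
        rw [hs', hθ]; field_simp; try ring]
      rw [Real.cos_sub, Real.cos_add, Real.sin_add, Real.cos_pi_div_two, Real.sin_pi_div_two,
        Real.sin_nat_mul_pi, cos_nat_pi_aux]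
      ring
    have hterm : ∀ j ∈ Finset.range N,
        -(4/π^2) * (1/(2*(k:ℝ)+1)^2 *
          Real.cos (2*π*(2*(k:ℝ)+1)*((2*(j:ℝ)+1)/(4*(N:ℝ)) + 1/4)))
        = (4/π^2) * (-1:ℝ)^k / (2*(k:ℝ)+1)^2 * Real.sin ((2*(j:ℝ)+1)*((2*(k:ℝ)+1)*θ)) := by
      intro j _
      rw [show 2*π*(2*(k:ℝ)+1)*((2*(j:ℝ)+1)/(4*(N:ℝ)) + 1/4)
          = ((2*(j:ℝ)+1)*((2*(k:ℝ)+1)*θ) + π/2) + (k:ℝ)*π by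
        rw [hθ]; field_simp; try ring]
      rw [Real.cos_add, Real.sin_nat_mul_pi, cos_nat_pi_aux, Real.cos_add_pi_div_two]
      ring
    have hS2 := eq_inv_of_mul_eq_one_right hdir
    rw [Finset.sum_congr rfl hterm, ← Finset.mul_sum, hS2]
    simp only [fSeries]
    rw [hcos]
    rcases Nat.even_or_odd k with hk | hk
    · rw [hk.neg_one_pow]
      ring
    · rw [hk.neg_one_pow]
      ring
  rw [hfeq]
  convert hsum using 1
  rcases hℓ with h | h
  · subst h
    rw [show N = K + (K+1) by omega,
      show ((K + (K+1):ℕ):ℝ) = 2*(K:ℝ)+1 by push_cast; ring,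
      sumv_odd_aux]
    push_cast
    have hKne : 2*(K:ℝ)+1 ≠ 0 := by positivity
    field_simp
    try ring
  · subst h
    rw [show N = (K+1) + (K+1) by omega,
      show (((K+1) + (K+1):ℕ):ℝ) = 2*(K:ℝ)+2 by push_cast; ring,
      sumv_even_aux]
    push_cast
    have hKne : 2*(K:ℝ)+2 ≠ 0 := by positivity
    field_simp
    try ring
end

section
/- For every positive integer ℓ, the series defining f(ℓ/(1+4ℓ)) converges with sum 1/2 + ((−1)^ℓ − 1)/(2(1+4ℓ)); in particular the sum is 1/2 when ℓ is even and 1/2 − 1/(1+4ℓ) when ℓ is odd. -/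
open Real

private lemma cos_expand (m : ℕ) (x : ℝ) :
    Real.cos ((2 * (m : ℝ) + 1) * x) =
      (-1 : ℝ) ^ m * (1 + 2 * ∑ t ∈ Finset.range m, (-1 : ℝ) ^ (t + 1) *
        Real.cos (2 * ((t : ℝ) + 1) * x)) * Real.cos x := by
  induction m with
  | zero => simp
  | succ n ih =>
    have key : Real.cos ((2 * ((n : ℝ) + 1) + 1) * x)
        = 2 * Real.cos (2 * ((n : ℝ) + 1) * x) * Real.cos x
          - Real.cos ((2 * (n : ℝ) + 1) * x) := by
      have h1 := Real.cos_add (2 * ((n : ℝ) + 1) * x) x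
      have h2 := Real.cos_sub (2 * ((n : ℝ) + 1) * x) x
      have e1 : (2 * ((n : ℝ) + 1) + 1) * x = 2 * ((n : ℝ) + 1) * x + x := by ring
      have e2 : (2 * (n : ℝ) + 1) * x = 2 * ((n : ℝ) + 1) * x - x := by ring
      rw [e1, e2, h1, h2]; ring
    have hp : (-1 : ℝ) ^ n * (-1) ^ n = 1 := by
      rw [← pow_add]; exact Even.neg_one_pow ⟨n, rfl⟩
    rw [Finset.sum_range_succ]
    push_cast
    rw [key, ih]
    linear_combination (-(2 * Real.cos (2 * ((n : ℝ) + 1) * x) * Real.cos x)) * hp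

private lemma alt1 (n : ℕ) : ∑ t ∈ Finset.range n, (-1 : ℝ) ^ (t + 1) = ((-1) ^ n - 1) / 2 := by
  induction n with
  | zero => simp
  | succ n ih => rw [Finset.sum_range_succ, ih]; ring

private lemma alt2 (n : ℕ) : ∑ t ∈ Finset.range n, (-1 : ℝ) ^ (t + 1) * ((t : ℝ) + 1)
    = ((-1) ^ n * (2 * n + 1) - 1) / 4 := by
  induction n with
  | zero => simp
  | succ n ih => rw [Finset.sum_range_succ, ih]; push_cast; ring

private lemma bern2_eval (z : ℝ) :
    (Polynomial.map (algebraMap ℚ ℝ) (Polynomial.bernoulli 2)).eval z = z ^ 2 - z + 1 / 6 := by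
  have h2 : _root_.bernoulli 2 = 1 / 6 := by
    rw [bernoulli_eq_bernoulli'_of_ne_one (by norm_num), bernoulli'_two]
  simp [Polynomial.bernoulli, Finset.sum_range_succ, h2]
  ring

private lemma cos_series (x : ℝ) (hx : x ∈ Set.Icc (0 : ℝ) 1) :
    HasSum (fun n : ℕ => 1 / (n : ℝ) ^ 2 * Real.cos (2 * π * n * x))
      (π ^ 2 * (x ^ 2 - x + 1 / 6)) := by
  have h := hasSum_one_div_nat_pow_mul_cos (k := 1) one_ne_zero hx
  have e1 : 2 * 1 = 2 := rfl
  rw [e1] at h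
  have : (-1 : ℝ) ^ (1 + 1) * (2 * π) ^ 2 / 2 / ((Nat.factorial 2 : ℕ) : ℝ)
      * (Polynomial.map (algebraMap ℚ ℝ) (Polynomial.bernoulli 2)).eval x
      = π ^ 2 * (x ^ 2 - x + 1 / 6) := by
    rw [bern2_eval]
    rw [show ((Nat.factorial 2 : ℕ) : ℝ) = 2 by norm_num [Nat.factorial]]
    ring
  rw [this] at h
  exact h

private lemma hasSum_tri {y : ℝ} (hy : y ∈ Set.Icc (0 : ℝ) 1) :
    HasSum (fun k : ℕ => (4 / π ^ 2) * Real.cos ((2 * (k : ℝ) + 1) * π * y) / (2 * (k : ℝ) + 1) ^ 2)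
      ((1 - 2 * y) / 2) := by
  have hπ : π ≠ 0 := Real.pi_ne_zero
  have hy2 : y / 2 ∈ Set.Icc (0 : ℝ) 1 := ⟨by linarith [hy.1], by linarith [hy.2]⟩
  have h1 := cos_series (y / 2) hy2
  have h2 := cos_series y hy
  set f1 : ℕ → ℝ := fun n => 1 / (n : ℝ) ^ 2 * Real.cos (2 * π * n * (y / 2)) with hf1
  have hEven : HasSum (fun m : ℕ => f1 (2 * m)) (π ^ 2 * (y ^ 2 - y + 1 / 6) / 4) := by
    refine HasSum.congr_fun (h2.div_const 4) ?_
    intro m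
    show f1 (2 * m) = 1 / ((m : ℝ)) ^ 2 * Real.cos (2 * π * m * y) / 4
    show 1 / ((2 * m : ℕ) : ℝ) ^ 2 * Real.cos (2 * π * ((2 * m : ℕ) : ℝ) * (y / 2))
        = 1 / ((m : ℝ)) ^ 2 * Real.cos (2 * π * m * y) / 4
    push_cast
    rw [show 2 * π * (2 * (m : ℝ)) * (y / 2) = 2 * π * m * y by ring]
    rw [mul_pow]
    rcases eq_or_ne (m : ℝ) 0 with h0 | h0
    · simp [h0]
    · field_simp; ring
  have hOdd : HasSum (fun m : ℕ => f1 (2 * m + 1)) (∑' m : ℕ, f1 (2 * m + 1)) :=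
    Summable.hasSum (h1.summable.comp_injective fun a b hab => by omega)
  have htot := hEven.even_add_odd hOdd
  have hsval : (∑' m : ℕ, f1 (2 * m + 1))
      = π ^ 2 * ((y / 2) ^ 2 - y / 2 + 1 / 6) - π ^ 2 * (y ^ 2 - y + 1 / 6) / 4 := by
    have := h1.unique htot
    linarith [this]
  rw [hsval] at hOdd
  have final := hOdd.mul_left (4 / π ^ 2)
  have hval : 4 / π ^ 2 * (π ^ 2 * ((y / 2) ^ 2 - y / 2 + 1 / 6)
      - π ^ 2 * (y ^ 2 - y + 1 / 6) / 4) = (1 - 2 * y) / 2 := by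
    field_simp
    ring
  rw [hval] at final
  refine HasSum.congr_fun final ?_
  intro k
  show (4 / π ^ 2) * Real.cos ((2 * (k : ℝ) + 1) * π * y) / (2 * (k : ℝ) + 1) ^ 2
      = 4 / π ^ 2 * (1 / (((2 * k + 1 : ℕ) : ℝ)) ^ 2 * Real.cos (2 * π * ((2 * k + 1 : ℕ) : ℝ) * (y / 2)))
  push_cast
  rw [show 2 * π * (2 * (k : ℝ) + 1) * (y / 2) = (2 * (k : ℝ) + 1) * π * y by ring]
  ring
private lemma sec_eq (ℓ k : ℕ) (hnd : ¬ (4 * ℓ + 1) ∣ (2 * k + 1)) :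
    1 / Real.cos ((2 * (k : ℝ) + 1) * π * ((ℓ : ℝ) / (1 + 4 * (ℓ : ℝ))))
      = 2 * (-1 : ℝ) ^ ℓ * (1 + 2 * ∑ t ∈ Finset.range ℓ, (-1 : ℝ) ^ (t + 1) *
          Real.cos ((2 * (k : ℝ) + 1) * π * (((t : ℝ) + 1) / (1 + 4 * (ℓ : ℝ))))) := by
  have hπ : π ≠ 0 := Real.pi_ne_zero
  set N : ℝ := 1 + 4 * (ℓ : ℝ) with hNdef
  have hN0 : N ≠ 0 := by positivity
  set x : ℝ := (2 * (k : ℝ) + 1) * π / (2 * N) with hxdef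
  have harg : (2 * (k : ℝ) + 1) * π * ((ℓ : ℝ) / N) = 2 * (ℓ : ℝ) * x := by
    rw [hxdef]; field_simp
  have hargt : ∀ t : ℕ, (2 * (k : ℝ) + 1) * π * (((t : ℝ) + 1) / N) = 2 * ((t : ℝ) + 1) * x := by
    intro t; rw [hxdef]; field_simp
  have hx0 : Real.cos x ≠ 0 := by
    intro h
    rw [Real.cos_eq_zero_iff] at h
    obtain ⟨j, hj⟩ := h
    rw [hxdef] at hj
    have hj' : 2 * (k : ℝ) + 1 = (2 * (j : ℝ) + 1) * N := by
      field_simp at hj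
      have hπ2 : (2 : ℝ) * π ≠ 0 := by positivity
      apply mul_right_cancel₀ hπ2
      linear_combination (2 * π) * hj
    rw [hNdef] at hj'
    have hz : (2 * (k : ℤ) + 1) = (2 * j + 1) * (1 + 4 * (ℓ : ℤ)) := by exact_mod_cast hj'
    have hdvd : ((4 * ℓ + 1 : ℕ) : ℤ) ∣ ((2 * k + 1 : ℕ) : ℤ) := by
      refine ⟨2 * j + 1, ?_⟩
      push_cast
      linarith [hz]
    exact hnd (Int.natCast_dvd_natCast.mp hdvd)
  have hxN : Real.cos (N * x) = 0 := by
    rw [Real.cos_eq_zero_iff]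
    refine ⟨(k : ℤ), ?_⟩
    rw [hxdef]
    push_cast
    field_simp
  have key : 2 * Real.cos ((2 * (ℓ : ℝ) + 1) * x) * Real.cos (2 * (ℓ : ℝ) * x) = Real.cos x := by
    have hca := Real.cos_add ((2 * (ℓ : ℝ) + 1) * x) (2 * (ℓ : ℝ) * x)
    have hcs := Real.cos_sub ((2 * (ℓ : ℝ) + 1) * x) (2 * (ℓ : ℝ) * x)
    have hA : (2 * (ℓ : ℝ) + 1) * x + 2 * (ℓ : ℝ) * x = N * x := by rw [hNdef]; ring
    have hB : (2 * (ℓ : ℝ) + 1) * x - 2 * (ℓ : ℝ) * x = x := by ring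
    have := congrArg₂ (· + ·) hca hcs
    simp only [hA, hB, hxN] at this
    simp only [zero_add] at this
    linarith [this]
  set D : ℝ := 1 + 2 * ∑ t ∈ Finset.range ℓ, (-1 : ℝ) ^ (t + 1) * Real.cos (2 * ((t : ℝ) + 1) * x)
    with hDdef
  have hexp := cos_expand ℓ x
  rw [← hDdef] at hexp
  have hD : (2 * (-1 : ℝ) ^ ℓ * D) * Real.cos (2 * (ℓ : ℝ) * x) = 1 := by
    have h1 : (2 * (-1 : ℝ) ^ ℓ * D * Real.cos (2 * (ℓ : ℝ) * x)) * Real.cos x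
        = 1 * Real.cos x := by
      rw [one_mul]
      linear_combination key - 2 * Real.cos (2 * (ℓ : ℝ) * x) * hexp
    exact mul_right_cancel₀ hx0 h1
  have hsec : 1 / Real.cos (2 * (ℓ : ℝ) * x) = 2 * (-1 : ℝ) ^ ℓ * D := by
    rw [one_div]
    exact (eq_inv_of_mul_eq_one_left hD).symm
  have hsum : ∑ t ∈ Finset.range ℓ, (-1 : ℝ) ^ (t + 1) *
        Real.cos ((2 * (k : ℝ) + 1) * π * (((t : ℝ) + 1) / N))
      = ∑ t ∈ Finset.range ℓ, (-1 : ℝ) ^ (t + 1) * Real.cos (2 * ((t : ℝ) + 1) * x) :=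
    Finset.sum_congr rfl fun t _ => by rw [hargt t]
  rw [harg, hsec, hDdef, hsum]
private lemma cos_div_case (ℓ k q c : ℕ) (hk : 2 * k + 1 = (4 * ℓ + 1) * (2 * q + 1)) :
    Real.cos ((2 * (k : ℝ) + 1) * π * ((c : ℝ) / (1 + 4 * (ℓ : ℝ)))) = (-1 : ℝ) ^ c := by
  have hN0 : (1 : ℝ) + 4 * (ℓ : ℝ) ≠ 0 := by positivity
  have hkr : 2 * (k : ℝ) + 1 = (1 + 4 * (ℓ : ℝ)) * (2 * (q : ℝ) + 1) := by
    have h : ((2 * k + 1 : ℕ) : ℝ) = (((4 * ℓ + 1) * (2 * q + 1) : ℕ) : ℝ) := by rw [hk]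
    push_cast at h
    linarith [h]
  have harg : (2 * (k : ℝ) + 1) * π * ((c : ℝ) / (1 + 4 * (ℓ : ℝ)))
      = (((2 * q + 1) * c : ℕ) : ℝ) * π := by
    rw [hkr]
    push_cast
    field_simp
  rw [harg]
  have := Real.cos_nat_mul_pi_sub 0 ((2 * q + 1) * c)
  simp only [sub_zero, Real.cos_zero, mul_one] at this
  rw [this]
  rw [pow_mul]
  congr 1
  exact Odd.neg_one_pow ⟨q, rfl⟩

theorem f_ell_div_one_add_four_ell (ℓ : ℕ) (hℓ : 0 < ℓ) :
    HasSum (fSeries ((ℓ : ℝ) / (1 + 4 * (ℓ : ℝ))))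
      (1 / 2 + ((-1 : ℝ) ^ ℓ - 1) / (2 * (1 + 4 * (ℓ : ℝ)))) ∧
    (Even ℓ → HasSum (fSeries ((ℓ : ℝ) / (1 + 4 * (ℓ : ℝ)))) (1 / 2)) ∧
    (Odd ℓ → HasSum (fSeries ((ℓ : ℝ) / (1 + 4 * (ℓ : ℝ))))
        (1 / 2 - 1 / (1 + 4 * (ℓ : ℝ)))) := by
  classical
  have hπ : π ≠ 0 := Real.pi_ne_zero
  have hN0 : (1 : ℝ) + 4 * (ℓ : ℝ) ≠ 0 := by positivity
  -- the main summand decomposition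
  set N : ℝ := 1 + 4 * (ℓ : ℝ) with hNdef
  have hmain : HasSum (fSeries ((ℓ : ℝ) / N))
      (1 / 2 + ((-1 : ℝ) ^ ℓ - 1) / (2 * N)) := by
    -- the "regular" part g
    have hy0 : (0 : ℝ) ∈ Set.Icc (0 : ℝ) 1 := ⟨le_rfl, zero_le_one⟩
    have hT0 := hasSum_tri hy0
    have hTt : ∀ t ∈ Finset.range ℓ,
        HasSum (fun k : ℕ => (-1 : ℝ) ^ (t + 1) * ((4 / π ^ 2) *
            Real.cos ((2 * (k : ℝ) + 1) * π * (((t : ℝ) + 1) / N)) / (2 * (k : ℝ) + 1) ^ 2))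
          ((-1 : ℝ) ^ (t + 1) * ((1 - 2 * (((t : ℝ) + 1) / N)) / 2)) := by
      intro t ht
      have htl : (t : ℝ) + 1 ≤ N := by
        have : (t : ℝ) + 1 ≤ (ℓ : ℝ) := by
          have := Finset.mem_range.mp ht
          exact_mod_cast Nat.succ_le_of_lt this
        rw [hNdef]
        linarith [this, Nat.cast_nonneg (α := ℝ) ℓ]
      have hmem : ((t : ℝ) + 1) / N ∈ Set.Icc (0 : ℝ) 1 := by
        constructor
        · positivity
        · rw [div_le_one (by positivity)]; exact htl
      exact (hasSum_tri hmem).mul_left _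
    have hSum := hasSum_sum hTt
    have hg := (hT0.add (hSum.mul_left 2)).mul_left (2 * (-1 : ℝ) ^ ℓ)
    -- the correction part e
    set e : ℕ → ℝ := fun k => if (4 * ℓ + 1) ∣ (2 * k + 1) then
        (4 / π ^ 2) * ((-1 : ℝ) ^ (ℓ + 1) * N) / (2 * (k : ℝ) + 1) ^ 2 else 0 with hedef
    have hinj : Function.Injective (fun q : ℕ => 2 * ℓ + (4 * ℓ + 1) * q) := by
      intro a b hab
      simp only [] at hab
      have := Nat.add_left_cancel hab
      exact Nat.eq_of_mul_eq_mul_left (by omega) this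
    have hvanish : ∀ k ∉ Set.range (fun q : ℕ => 2 * ℓ + (4 * ℓ + 1) * q), e k = 0 := by
      intro k hk
      rw [hedef]
      simp only []
      rw [if_neg]
      intro hdvd
      obtain ⟨m, hm⟩ := hdvd
      rcases Nat.even_or_odd m with ⟨a, ha⟩ | ⟨a, ha⟩
      · subst ha
        set c := (4 * ℓ + 1) * a with hcc
        have h2 : 2 * k + 1 = 2 * c := by rw [hm, hcc]; ring
        omega
      · apply hk
        refine ⟨a, ?_⟩
        simp only []
        subst ha
        set c := (4 * ℓ + 1) * a with hcc
        have h2 : 2 * k + 1 = 2 * c + 4 * ℓ + 1 := by rw [hm]; rw [hcc]; ring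
        omega
    have hiq : ∀ q : ℕ, 2 * (2 * ℓ + (4 * ℓ + 1) * q) + 1 = (4 * ℓ + 1) * (2 * q + 1) := by
      intro q; ring
    have he2 : HasSum (fun q : ℕ => e (2 * ℓ + (4 * ℓ + 1) * q))
        (((-1 : ℝ) ^ (ℓ + 1) / N) * ((1 - 2 * 0) / 2)) := by
      refine HasSum.congr_fun (hT0.mul_left ((-1 : ℝ) ^ (ℓ + 1) / N)) ?_
      intro q
      rw [hedef]
      simp only []
      rw [if_pos ⟨2 * q + 1, (hiq q).symm ▸ rfl⟩]
      have hcast : 2 * ((( 2 * ℓ + (4 * ℓ + 1) * q : ℕ)) : ℝ) + 1 = N * (2 * (q : ℝ) + 1) := by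
        rw [hNdef]; push_cast; ring
      rw [hcast]
      rw [mul_zero, Real.cos_zero]
      have hq0 : 2 * (q : ℝ) + 1 ≠ 0 := by positivity
      field_simp
    have he' : HasSum e (((-1 : ℝ) ^ (ℓ + 1) / N) * ((1 - 2 * 0) / 2)) :=
      (Function.Injective.hasSum_iff hinj hvanish).mp he2
    -- pointwise identity
    have hfg : ∀ k : ℕ, fSeries ((ℓ : ℝ) / N) k =
        (2 * (-1 : ℝ) ^ ℓ * ((4 / π ^ 2) * Real.cos ((2 * (k : ℝ) + 1) * π * 0) / (2 * (k : ℝ) + 1) ^ 2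
          + 2 * ∑ t ∈ Finset.range ℓ, (-1 : ℝ) ^ (t + 1) * ((4 / π ^ 2) *
              Real.cos ((2 * (k : ℝ) + 1) * π * (((t : ℝ) + 1) / N)) / (2 * (k : ℝ) + 1) ^ 2)))
        + e k := by
      intro k
      simp only [fSeries]
      rw [mul_zero, Real.cos_zero]
      by_cases hd : (4 * ℓ + 1) ∣ (2 * k + 1)
      · -- divisible case
        obtain ⟨m, hm⟩ := hd
        obtain ⟨q, hq⟩ : ∃ q, m = 2 * q + 1 := by
          rcases Nat.even_or_odd m with ⟨a, ha⟩ | ⟨a, ha⟩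
          · exfalso
            subst ha; set c := (4 * ℓ + 1) * a with hcc
            have : 2 * k + 1 = 2 * c := by rw [hm, hcc]; ring
            omega
          · exact ⟨a, ha⟩
        subst hq
        have hk : 2 * k + 1 = (4 * ℓ + 1) * (2 * q + 1) := hm
        have hcosl := cos_div_case ℓ k q ℓ hk
        rw [hNdef]
        rw [hcosl]
        have hsum : ∑ t ∈ Finset.range ℓ, (-1 : ℝ) ^ (t + 1) * ((4 / π ^ 2) *
              Real.cos ((2 * (k : ℝ) + 1) * π * (((t : ℝ) + 1) / (1 + 4 * (ℓ : ℝ)))) / (2 * (k : ℝ) + 1) ^ 2)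
            = ∑ t ∈ Finset.range ℓ, (4 / π ^ 2) / (2 * (k : ℝ) + 1) ^ 2 := by
          refine Finset.sum_congr rfl fun t _ => ?_
          have hc := cos_div_case ℓ k q (t + 1) hk
          push_cast at hc
          rw [hc]
          have hone : (-1 : ℝ) ^ (t + 1) * (-1 : ℝ) ^ (t + 1) = 1 := by
            rw [← pow_add]; exact Even.neg_one_pow ⟨t + 1, rfl⟩
          calc (-1 : ℝ) ^ (t + 1) * (4 / π ^ 2 * (-1 : ℝ) ^ (t + 1) / (2 * (k : ℝ) + 1) ^ 2)
              = ((-1 : ℝ) ^ (t + 1) * (-1 : ℝ) ^ (t + 1)) * (4 / π ^ 2 / (2 * (k : ℝ) + 1) ^ 2) := by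
                ring
            _ = 4 / π ^ 2 / (2 * (k : ℝ) + 1) ^ 2 := by rw [hone]; ring
        rw [hsum, Finset.sum_const, Finset.card_range, nsmul_eq_mul]
        rw [hedef]
        simp only []
        rw [if_pos ⟨2 * q + 1, hk⟩]
        rw [hNdef]
        have h1 : (1 : ℝ) / (-1 : ℝ) ^ ℓ = (-1 : ℝ) ^ ℓ := by
          rcases Nat.even_or_odd ℓ with h | h
          · rw [h.neg_one_pow]; norm_num
          · rw [h.neg_one_pow]; norm_num
        rw [h1]
        ring
      · -- non-divisible case
        rw [hedef]
        simp only []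
        rw [if_neg hd, add_zero]
        rw [hNdef]
        rw [sec_eq ℓ k hd]
        have hsum : ∑ t ∈ Finset.range ℓ, (-1 : ℝ) ^ (t + 1) * ((4 / π ^ 2) *
              Real.cos ((2 * (k : ℝ) + 1) * π * (((t : ℝ) + 1) / (1 + 4 * (ℓ : ℝ)))) / (2 * (k : ℝ) + 1) ^ 2)
            = (4 / π ^ 2 / (2 * (k : ℝ) + 1) ^ 2) * ∑ t ∈ Finset.range ℓ, (-1 : ℝ) ^ (t + 1) *
              Real.cos ((2 * (k : ℝ) + 1) * π * (((t : ℝ) + 1) / (1 + 4 * (ℓ : ℝ)))) := by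
          rw [Finset.mul_sum]
          exact Finset.sum_congr rfl fun t _ => by ring
        rw [hsum]
        ring
    have htotal := (hg.add he').congr_fun hfg
    -- compute the sum value
    have hval : 2 * (-1 : ℝ) ^ ℓ * ((1 - 2 * 0) / 2
          + 2 * ∑ t ∈ Finset.range ℓ, (-1 : ℝ) ^ (t + 1) * ((1 - 2 * (((t : ℝ) + 1) / N)) / 2))
        + ((-1 : ℝ) ^ (ℓ + 1) / N) * ((1 - 2 * 0) / 2)
        = 1 / 2 + ((-1 : ℝ) ^ ℓ - 1) / (2 * N) := by
      have hsplit : ∑ t ∈ Finset.range ℓ, (-1 : ℝ) ^ (t + 1) * ((1 - 2 * (((t : ℝ) + 1) / N)) / 2)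
          = (1 / 2) * (((-1 : ℝ) ^ ℓ - 1) / 2)
            - (1 / N) * (((-1 : ℝ) ^ ℓ * (2 * ℓ + 1) - 1) / 4) := by
        rw [← alt1 ℓ, ← alt2 ℓ, Finset.mul_sum, Finset.mul_sum, ← Finset.sum_sub_distrib]
        refine Finset.sum_congr rfl fun t _ => ?_
        ring
      rw [hsplit]
      rcases Nat.even_or_odd ℓ with h | h
      · rw [h.neg_one_pow, Odd.neg_one_pow (by exact Even.add_one h)]
        field_simp
        ring
      · rw [h.neg_one_pow, Even.neg_one_pow (by exact Odd.add_one h)]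
        field_simp
        ring
    rw [← hval]
    exact htotal
  refine ⟨hmain, fun hE => ?_, fun hO => ?_⟩
  · have := hmain
    rw [hE.neg_one_pow] at this
    simpa using this
  · have := hmain
    rw [hO.neg_one_pow] at this
    have heq : 1 / 2 + ((-1 : ℝ) - 1) / (2 * N) = 1 / 2 - 1 / N := by
      field_simp
      ring
    rw [heq] at this
    exact this
end
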